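/- For every K > 0 there exists C > 0 such that the following holds: let ε ∈ (0, 1/2) and let w : ℝ² → ℝ be measurable with 0 ≤ w(x) ≤ K/ε² for almost every x and ∫_{ℝ²} w(x) dx = 1. If L > 0 is such that R := exp(C(1 + L)) satisfies R ≤ 1/ε, then any two points x₁, x₂ ∈ ℝ² with Gw(x₁) ≥ log(1/ε) − L and Gw(x₂) ≥ log(1/ε) − L satisfy |x₁ − x₂| ≤ 2Rε. In particular, the superlevel set {x : Gw(x) > log(1/ε) − L} has diameter at most 2Rε. -/

import Mathlib

open MeasureTheory Real intervalIntegral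

/-- Euclidean norm on `ℝ²`. -/
noncomputable def vnorm (x : ℝ × ℝ) : ℝ := Real.sqrt (x.1 ^ 2 + x.2 ^ 2)

/-- Rotation `R_a` on `ℝ²`. -/
noncomputable def vrot (a : ℝ) (x : ℝ × ℝ) : ℝ × ℝ :=
  (x.1 * Real.cos a + x.2 * Real.sin a, -x.1 * Real.sin a + x.2 * Real.cos a)

/-- Japanese bracket `⟨x⟩ = √(1+|x|²)` on `ℝ²`. -/
noncomputable def jap (x : ℝ × ℝ) : ℝ := Real.sqrt (1 + x.1 ^ 2 + x.2 ^ 2)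

/-- The truncated logarithmic potential
`Gw(x) = ∫ log(1/|x−y|) 1_{|x−y|≤1} w(y) dy`. -/
noncomputable def Gfun (w : ℝ × ℝ → ℝ) (x : ℝ × ℝ) : ℝ :=
  ∫ y : ℝ × ℝ, (if vnorm (x - y) ≤ 1 then Real.log (1 / vnorm (x - y)) else 0) * w y

open Set

lemma vnorm_nonneg (x : ℝ × ℝ) : 0 ≤ vnorm x := Real.sqrt_nonneg _

lemma vnorm_neg (x : ℝ × ℝ) : vnorm (-x) = vnorm x := by
  simp [vnorm]

lemma vnorm_add_le (a b : ℝ × ℝ) : vnorm (a + b) ≤ vnorm a + vnorm b := by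
  have h1 := Real.sq_sqrt (by positivity : (0:ℝ) ≤ a.1 ^ 2 + a.2 ^ 2)
  have h2 := Real.sq_sqrt (by positivity : (0:ℝ) ≤ b.1 ^ 2 + b.2 ^ 2)
  have n1 := Real.sqrt_nonneg (a.1 ^ 2 + a.2 ^ 2)
  have n2 := Real.sqrt_nonneg (b.1 ^ 2 + b.2 ^ 2)
  have key : (a.1 + b.1) ^ 2 + (a.2 + b.2) ^ 2 ≤ (vnorm a + vnorm b) ^ 2 := by
    unfold vnorm
    nlinarith [sq_nonneg (a.1 * b.2 - a.2 * b.1),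
      sq_nonneg (Real.sqrt (a.1 ^ 2 + a.2 ^ 2) * Real.sqrt (b.1 ^ 2 + b.2 ^ 2)
        - a.1 * b.1 - a.2 * b.2), mul_nonneg n1 n2]
  calc vnorm (a + b) = Real.sqrt ((a.1 + b.1) ^ 2 + (a.2 + b.2) ^ 2) := rfl
    _ ≤ Real.sqrt ((vnorm a + vnorm b) ^ 2) := Real.sqrt_le_sqrt key
    _ = vnorm a + vnorm b := Real.sqrt_sq (by unfold vnorm; positivity)

lemma vnorm_eq_zero_iff {x : ℝ × ℝ} : vnorm x = 0 ↔ x = 0 := by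
  unfold vnorm
  rw [Real.sqrt_eq_zero (by positivity)]
  constructor
  · intro h
    have : x.1 = 0 ∧ x.2 = 0 := by constructor <;> nlinarith [sq_nonneg x.1, sq_nonneg x.2]
    exact Prod.ext this.1 this.2
  · rintro rfl; simp

lemma continuous_vnorm : Continuous vnorm := by
  unfold vnorm; fun_prop

lemma vnorm_polarCoord_symm (p : ℝ × ℝ) : vnorm (polarCoord.symm p) = |p.1| := by
  have : vnorm (polarCoord.symm p)
      = Real.sqrt ((p.1 * Real.cos p.2) ^ 2 + (p.1 * Real.sin p.2) ^ 2) := rfl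
  rw [this]
  have : (p.1 * Real.cos p.2) ^ 2 + (p.1 * Real.sin p.2) ^ 2 = p.1 ^ 2 := by
    have := Real.sin_sq_add_cos_sq p.2
    nlinarith [this]
  rw [this, Real.sqrt_sq_eq_abs]

lemma integrable_of_polar (f : ℝ × ℝ → ℝ)
    (h : IntegrableOn (fun p => p.1 * f (polarCoord.symm p)) polarCoord.target volume) :
    Integrable f volume := by
  set B : ℝ × ℝ → ℝ × ℝ →L[ℝ] ℝ × ℝ := fun p =>
    LinearMap.toContinuousLinearMap (Matrix.toLin (Module.Basis.finTwoProd ℝ) (Module.Basis.finTwoProd ℝ)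
      !![Real.cos p.2, -p.1 * Real.sin p.2; Real.sin p.2, p.1 * Real.cos p.2]) with hB
  have A : ∀ p ∈ polarCoord.target, HasFDerivWithinAt polarCoord.symm (B p) polarCoord.target p :=
    fun p _ => (hasFDerivAt_polarCoord_symm p).hasFDerivWithinAt
  have B_det : ∀ p, (B p).det = p.1 := by
    intro p
    conv_rhs => rw [← one_mul p.1, ← Real.cos_sq_add_sin_sq p.2]
    simp only [hB, neg_mul, LinearMap.det_toContinuousLinearMap, LinearMap.det_toLin,
      Matrix.det_fin_two_of, sub_neg_eq_add]
    ring
  have inj : Set.InjOn polarCoord.symm polarCoord.target := polarCoord.symm.injOn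
  have himg : polarCoord.symm '' polarCoord.target = polarCoord.source :=
    polarCoord.symm_image_target_eq_source
  have h2 : IntegrableOn f polarCoord.source volume := by
    rw [← himg]
    rw [integrableOn_image_iff_integrableOn_abs_det_fderiv_smul volume
      polarCoord.open_target.measurableSet A inj f]
    apply h.congr_fun ?_ polarCoord.open_target.measurableSet
    intro p hp
    dsimp only
    rw [B_det, abs_of_pos (hp.1 : (0:ℝ) < p.1), smul_eq_mul]
  rw [← integrableOn_univ]
  exact h2.congr_set_ae polarCoord_source_ae_eq_univ.symm

lemma radial_inv (ρ : ℝ) (hρ : 0 < ρ) :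
    Integrable (fun z : ℝ × ℝ => if vnorm z ≤ ρ then (vnorm z)⁻¹ else 0) volume ∧
    (∫ z : ℝ × ℝ, (if vnorm z ≤ ρ then (vnorm z)⁻¹ else 0)) = 2 * π * ρ := by
  set g : ℝ × ℝ → ℝ := fun z => if vnorm z ≤ ρ then (vnorm z)⁻¹ else 0 with hg
  have hEq : Set.EqOn (fun p : ℝ × ℝ => if p.1 ≤ ρ then (1:ℝ) else 0)
      (fun p : ℝ × ℝ => p.1 * g (polarCoord.symm p)) polarCoord.target := by
    intro p hp
    have hp1 : (0:ℝ) < p.1 := hp.1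
    show _ = p.1 * (if vnorm (polarCoord.symm p) ≤ ρ then (vnorm (polarCoord.symm p))⁻¹ else 0)
    rw [vnorm_polarCoord_symm, abs_of_pos hp1]
    by_cases h : p.1 ≤ ρ
    · simp [h, mul_inv_cancel₀ hp1.ne']
    · simp [h]
  have hq : IntegrableOn (fun p : ℝ × ℝ => if p.1 ≤ ρ then (1:ℝ) else 0)
      polarCoord.target volume := by
    have hgind : Integrable ((Set.Ioc (0:ℝ) ρ ×ˢ Set.Ioo (-π) π).indicator
        (fun _ => (1:ℝ))) volume := by
      rw [integrable_indicator_iff (measurableSet_Ioc.prod measurableSet_Ioo)]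
      refine integrableOn_const (ne_of_lt ?_)
      rw [Measure.volume_eq_prod, Measure.prod_prod, Real.volume_Ioc, Real.volume_Ioo]
      exact ENNReal.mul_lt_top ENNReal.ofReal_lt_top ENNReal.ofReal_lt_top
    refine Integrable.mono' hgind.restrict
      ((Measurable.ite (measurableSet_le measurable_fst measurable_const)
        measurable_const measurable_const).aestronglyMeasurable) ?_
    filter_upwards [ae_restrict_mem polarCoord.open_target.measurableSet] with p hp
    by_cases h : p.1 ≤ ρ
    · have hmem : p ∈ Set.Ioc (0:ℝ) ρ ×ˢ Set.Ioo (-π) π :=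
        ⟨⟨hp.1, h⟩, hp.2⟩
      simp [h, Set.indicator_of_mem hmem]
    · simp only [h, if_false, norm_zero]
      exact Set.indicator_nonneg (fun _ _ => zero_le_one) _
  have hint : IntegrableOn (fun p : ℝ × ℝ => p.1 * g (polarCoord.symm p))
      polarCoord.target volume :=
    hq.congr_fun hEq polarCoord.open_target.measurableSet
  have hgint : Integrable g volume := integrable_of_polar g hint
  refine ⟨hgint, ?_⟩
  rw [← integral_comp_polarCoord_symm g]
  have : (∫ p in polarCoord.target, p.1 • g (polarCoord.symm p))
      = ∫ p in polarCoord.target, (if p.1 ≤ ρ then (1:ℝ) else 0) := by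
    refine setIntegral_congr_fun polarCoord.open_target.measurableSet ?_
    intro p hp
    dsimp only
    rw [smul_eq_mul]
    exact (hEq hp).symm
  rw [this]
  have htarget : polarCoord.target = Set.Ioi (0:ℝ) ×ˢ Set.Ioo (-π) π := rfl
  rw [htarget, Measure.volume_eq_prod]
  have hmul : (∫ p in Set.Ioi (0:ℝ) ×ˢ Set.Ioo (-π) π, (if p.1 ≤ ρ then (1:ℝ) else 0)
        ∂(volume.prod volume))
      = (∫ r in Set.Ioi (0:ℝ), if r ≤ ρ then (1:ℝ) else 0) * ∫ _θ in Set.Ioo (-π) π, (1:ℝ) := by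
    rw [← setIntegral_prod_mul]
    simp only [mul_one]
  rw [hmul]
  have h1 : (∫ r in Set.Ioi (0:ℝ), if r ≤ ρ then (1:ℝ) else 0) = ρ := by
    have : (fun r : ℝ => if r ≤ ρ then (1:ℝ) else 0)
        = Set.indicator (Set.Iic ρ) (fun _ => (1:ℝ)) := by
      funext r
      by_cases h : r ≤ ρ <;> simp [Set.indicator_apply, Set.mem_Iic, h]
    rw [this, setIntegral_indicator measurableSet_Iic, setIntegral_const,
      Set.Ioi_inter_Iic, measureReal_def, Real.volume_Ioc, smul_eq_mul, mul_one,
      ENNReal.toReal_ofReal (by linarith : (0:ℝ) ≤ ρ - 0)]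
    ring
  have h2 : (∫ _θ in Set.Ioo (-π : ℝ) π, (1:ℝ)) = 2 * π := by
    rw [setIntegral_const, measureReal_def, Real.volume_Ioo, smul_eq_mul, mul_one,
      ENNReal.toReal_ofReal (by have := Real.pi_pos; linarith : (0:ℝ) ≤ π - (-π))]
    ring
  rw [h1, h2]
  ring

lemma radial_inv_shift (x : ℝ × ℝ) (ρ : ℝ) (hρ : 0 < ρ) :
    Integrable (fun y : ℝ × ℝ => if vnorm (x - y) ≤ ρ then (vnorm (x - y))⁻¹ else 0) volume ∧
    (∫ y : ℝ × ℝ, (if vnorm (x - y) ≤ ρ then (vnorm (x - y))⁻¹ else 0)) = 2 * π * ρ := by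
  obtain ⟨hi, hv⟩ := radial_inv ρ hρ
  constructor
  · exact hi.comp_sub_left x
  · rw [integral_sub_left_eq_self
      (fun z : ℝ × ℝ => if vnorm z ≤ ρ then (vnorm z)⁻¹ else 0) volume x]
    exact hv

lemma kernel_nonneg (z : ℝ × ℝ) :
    0 ≤ (if vnorm z ≤ 1 then Real.log (1 / vnorm z) else 0) := by
  by_cases h : vnorm z ≤ 1
  · rw [if_pos h]
    rcases eq_or_lt_of_le (vnorm_nonneg z) with h0 | h0
    · rw [← h0]; simp
    · exact Real.log_nonneg (by rw [le_div_iff₀ h0]; linarith)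
  · rw [if_neg h]

set_option maxHeartbeats 1000000 in
lemma half_lt_mass (K : ℝ) (hK : 0 < K) {ε : ℝ} (hε : ε ∈ Set.Ioo (0:ℝ) (1/2))
    {w : ℝ × ℝ → ℝ} (hw : Measurable w)
    (hwb : ∀ᵐ x : ℝ × ℝ, 0 ≤ w x ∧ w x ≤ K / ε ^ 2)
    (hwi : Integrable w) (hw1 : (∫ x : ℝ × ℝ, w x) = 1)
    {L : ℝ} (hL : 0 < L)
    (hR : Real.exp ((7 + Real.log (π * (K + 1))) * (1 + L)) ≤ 1 / ε)
    (x : ℝ × ℝ) (hx : Real.log (1 / ε) - L ≤ Gfun w x) :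
    1 / 2 < ∫ y in {y : ℝ × ℝ |
      vnorm (x - y) ≤ Real.exp ((7 + Real.log (π * (K + 1))) * (1 + L)) * ε}, w y := by
  obtain ⟨hε0, hεhalf⟩ := hε
  have hε1 : ε < 1 := by linarith
  have hπK1 : (1:ℝ) ≤ π * (K + 1) := by nlinarith [Real.pi_gt_three]
  have hπKpos : (0:ℝ) < π * (K + 1) := by linarith
  set lπK := Real.log (π * (K + 1)) with hlπKdef
  have hlπK : 0 ≤ lπK := Real.log_nonneg hπK1
  set C := 7 + lπK with hCdef
  have hC7 : 7 ≤ C := by linarith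
  set R := Real.exp (C * (1 + L)) with hRdef
  have hRpos : 0 < R := Real.exp_pos _
  have hR1 : 1 ≤ R := Real.one_le_exp (by nlinarith)
  set r := R * ε with hrdef
  have hrpos : 0 < r := by positivity
  have hr1 : r ≤ 1 := by
    calc R * ε ≤ (1 / ε) * ε := mul_le_mul_of_nonneg_right hR hε0.le
      _ = 1 := by field_simp
  have hεr : ε ≤ r := le_mul_of_one_le_left hε0.le hR1
  set T := Real.log (1 / ε) with hTdef
  have hT : T = -Real.log ε := by rw [hTdef, one_div, Real.log_inv]
  have hlogR : Real.log R = C * (1 + L) := Real.log_exp _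
  have hTR : Real.log R ≤ T := Real.log_le_log hRpos hR
  have hlogr : T - Real.log R = Real.log (1 / r) := by
    rw [one_div, Real.log_inv, hrdef, Real.log_mul hRpos.ne' hε0.ne', hT]; ring
  set B := {y : ℝ × ℝ | vnorm (x - y) ≤ r} with hBdef
  have hB : MeasurableSet B := by
    have hcont : Continuous (fun y : ℝ × ℝ => vnorm (x - y)) :=
      continuous_vnorm.comp (continuous_const.sub continuous_id)
    exact measurableSet_le hcont.measurable measurable_const
  have hwnn : ∀ᵐ y : ℝ × ℝ, 0 ≤ w y := hwb.mono fun y h => h.1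
  set m := ∫ y in B, w y with hmdef
  have hm0 : 0 ≤ m := setIntegral_nonneg_of_ae hwnn
  have hm1 : m ≤ 1 := hw1 ▸ setIntegral_le_integral hwi hwnn
  have hcompl : ∫ y in Bᶜ, w y = 1 - m := by
    have h := integral_add_compl hB hwi (f := w)
    rw [hw1] at h
    linarith
  have hGnn : 0 ≤ᵐ[volume] fun y : ℝ × ℝ =>
      (if vnorm (x - y) ≤ 1 then Real.log (1 / vnorm (x - y)) else 0) * w y := by
    filter_upwards [hwnn] with y hy
    exact mul_nonneg (kernel_nonneg _) hy
  -- M₃, common to both cases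
  set M₃ : ℝ × ℝ → ℝ := Bᶜ.indicator (fun y => (T - Real.log R) * w y) with hM₃def
  have hM₃i : Integrable M₃ := (hwi.const_mul _).indicator hB.compl
  have hIM₃ : ∫ y, M₃ y = (T - Real.log R) * (1 - m) := by
    rw [hM₃def, MeasureTheory.integral_indicator hB.compl, MeasureTheory.integral_const_mul, hcompl]
  rcases eq_or_lt_of_le hm0 with hmz | hmpos
  · -- m = 0 : contradiction
    exfalso
    have hw0 : ∀ᵐ y : ℝ × ℝ, y ∈ B → w y = 0 := by
      have h0 : w =ᵐ[volume.restrict B] 0 := by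
        refine (integral_eq_zero_iff_of_nonneg_ae (ae_restrict_of_ae hwnn)
          hwi.integrableOn).1 hmz.symm
      exact (ae_restrict_iff' hB).1 h0
    have hmaj : (fun y : ℝ × ℝ =>
        (if vnorm (x - y) ≤ 1 then Real.log (1 / vnorm (x - y)) else 0) * w y) ≤ᵐ[volume] M₃ := by
      filter_upwards [hwnn, hw0] with y hy hy0
      by_cases hyB : y ∈ B
      · rw [hy0 hyB, mul_zero, hM₃def,
          Set.indicator_of_notMem (by simpa using hyB : y ∉ Bᶜ)]
      · rw [hM₃def, Set.indicator_of_mem (Set.mem_compl hyB)]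
        have hv : r < vnorm (x - y) := lt_of_not_ge hyB
        by_cases h1 : vnorm (x - y) ≤ 1
        · rw [if_pos h1]
          refine mul_le_mul_of_nonneg_right ?_ hy
          rw [hlogr]
          exact Real.log_le_log (one_div_pos.2 (hrpos.trans hv))
            (one_div_le_one_div_of_le hrpos hv.le)
        · rw [if_neg h1, zero_mul]
          exact mul_nonneg (by linarith) hy
    have hGle : Gfun w x ≤ (T - Real.log R) * (1 - m) := by
      rw [← hIM₃]
      exact integral_mono_of_nonneg hGnn hM₃i hmaj
    rw [← hmz] at hGle
    norm_num at hGle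
    have h7 : 7 * (1 + L) ≤ C * (1 + L) :=
      mul_le_mul_of_nonneg_right hC7 (by linarith)
    linarith [hx, hGle, hlogR, h7]
  · by_contra hcon
    push_neg at hcon
    set ρ := ε * Real.sqrt (m / (π * (K + 1))) with hρdef
    have hqpos : 0 < m / (π * (K + 1)) := div_pos hmpos hπKpos
    have hρpos : 0 < ρ := mul_pos hε0 (Real.sqrt_pos.2 hqpos)
    have hq1 : m / (π * (K + 1)) ≤ 1 := (div_le_one hπKpos).2 (le_trans hm1 hπK1)
    have hρε : ρ ≤ ε := by
      have hs1 : Real.sqrt (m / (π * (K + 1))) ≤ 1 := Real.sqrt_le_one.mpr hq1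
      calc ρ = ε * Real.sqrt (m / (π * (K + 1))) := hρdef
        _ ≤ ε * 1 := mul_le_mul_of_nonneg_left hs1 hε0.le
        _ = ε := mul_one ε
    have hρr : ρ ≤ r := hρε.trans hεr
    have hρ1 : ρ ≤ 1 := hρε.trans hε1.le
    have hρ2 : ρ ^ 2 = ε ^ 2 * (m / (π * (K + 1))) := by
      rw [hρdef, mul_pow, Real.sq_sqrt hqpos.le]
    have hlogρ : Real.log (1 / ρ) = T + (lπK - Real.log m) / 2 := by
      rw [one_div, Real.log_inv, hρdef, Real.log_mul hε0.ne' (Real.sqrt_pos.2 hqpos).ne',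
        Real.log_sqrt hqpos.le, Real.log_div hmpos.ne' hπKpos.ne', hT, hlπKdef]
      ring
    have hlogρnn : 0 ≤ Real.log (1 / ρ) :=
      Real.log_nonneg (by rw [le_div_iff₀ hρpos]; linarith)
    set M₁ : ℝ × ℝ → ℝ := B.indicator (fun y => Real.log (1 / ρ) * w y) with hM₁def
    set M₂ : ℝ × ℝ → ℝ := fun y =>
      ((K + 1) / ε ^ 2 * ρ) * (if vnorm (x - y) ≤ ρ then (vnorm (x - y))⁻¹ else 0) with hM₂def
    have hM₁i : Integrable M₁ := (hwi.const_mul _).indicator hB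
    have hM₂i : Integrable M₂ := (radial_inv_shift x ρ hρpos).1.const_mul _
    have hIM₁ : ∫ y, M₁ y = Real.log (1 / ρ) * m := by
      rw [hM₁def, MeasureTheory.integral_indicator hB, MeasureTheory.integral_const_mul]
    have hIM₂ : ∫ y, M₂ y = 2 * m := by
      rw [hM₂def, MeasureTheory.integral_const_mul, (radial_inv_shift x ρ hρpos).2]
      have e : (K + 1) / ε ^ 2 * ρ * (2 * π * ρ) = 2 * π * (K + 1) * (ρ ^ 2 / ε ^ 2) := by
        ring
      rw [e, hρ2]
      field_simp
    have hmaj : (fun y : ℝ × ℝ =>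
        (if vnorm (x - y) ≤ 1 then Real.log (1 / vnorm (x - y)) else 0) * w y)
        ≤ᵐ[volume] fun y => M₁ y + M₂ y + M₃ y := by
      filter_upwards [hwb] with y hy
      obtain ⟨hy0, hy1⟩ := hy
      have hy1' : w y ≤ (K + 1) / ε ^ 2 := le_trans hy1 (by gcongr; linarith)
      have hvnn : 0 ≤ vnorm (x - y) := vnorm_nonneg _
      simp only [hM₁def, hM₂def, hM₃def]
      by_cases hvB : vnorm (x - y) ≤ r
      · have hyB : y ∈ B := hvB
        rw [Set.indicator_of_mem hyB, Set.indicator_of_notMem (fun hc => hc hyB : y ∉ Bᶜ)]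
        by_cases hvρ : vnorm (x - y) ≤ ρ
        · rcases eq_or_lt_of_le hvnn with hv0 | hv0
          · rw [if_pos (le_trans hvρ hρ1), if_pos hvρ, ← hv0]
            simp only [div_zero, Real.log_zero, zero_mul, inv_zero, mul_zero, add_zero]
            exact mul_nonneg hlogρnn hy0
          · rw [if_pos (hvρ.trans hρ1), if_pos hvρ]
            have hlog : Real.log (1 / vnorm (x - y))
                ≤ Real.log (1 / ρ) + ρ * (vnorm (x - y))⁻¹ := by
              have h1 : Real.log (1 / vnorm (x - y)) - Real.log (1 / ρ)
                  = Real.log (ρ / vnorm (x - y)) := by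
                rw [one_div, one_div, Real.log_inv, Real.log_inv,
                  Real.log_div hρpos.ne' hv0.ne']
                ring
              have h2 : Real.log (ρ / vnorm (x - y)) ≤ ρ / vnorm (x - y) - 1 :=
                Real.log_le_sub_one_of_pos (by positivity)
              have h3 : ρ / vnorm (x - y) = ρ * (vnorm (x - y))⁻¹ := div_eq_mul_inv _ _
              linarith
            have h4 : (ρ * (vnorm (x - y))⁻¹) * w y
                ≤ (ρ * (vnorm (x - y))⁻¹) * ((K + 1) / ε ^ 2) :=
              mul_le_mul_of_nonneg_left hy1' (by positivity)
            have h5 : (ρ * (vnorm (x - y))⁻¹) * ((K + 1) / ε ^ 2)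
                = ((K + 1) / ε ^ 2 * ρ) * (vnorm (x - y))⁻¹ := by ring
            have h6 : Real.log (1 / vnorm (x - y)) * w y
                ≤ (Real.log (1 / ρ) + ρ * (vnorm (x - y))⁻¹) * w y :=
              mul_le_mul_of_nonneg_right hlog hy0
            linarith [h4, h5, h6]
        · rw [if_pos (hvB.trans hr1), if_neg hvρ, mul_zero]
          have hρv : ρ < vnorm (x - y) := lt_of_not_ge hvρ
          have hlog : Real.log (1 / vnorm (x - y)) ≤ Real.log (1 / ρ) :=
            Real.log_le_log (one_div_pos.2 (hρpos.trans hρv))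
              (one_div_le_one_div_of_le hρpos hρv.le)
          have := mul_le_mul_of_nonneg_right hlog hy0
          linarith
      · have hyB : y ∉ B := hvB
        rw [Set.indicator_of_notMem hyB, Set.indicator_of_mem (Set.mem_compl hyB),
          if_neg (show ¬ vnorm (x - y) ≤ ρ from fun hc => hvB (hc.trans hρr)), mul_zero]
        have hv : r < vnorm (x - y) := lt_of_not_ge hvB
        by_cases h1 : vnorm (x - y) ≤ 1
        · rw [if_pos h1]
          have hlog : Real.log (1 / vnorm (x - y)) ≤ T - Real.log R := by
            rw [hlogr]
            exact Real.log_le_log (one_div_pos.2 (hrpos.trans hv))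
              (one_div_le_one_div_of_le hrpos hv.le)
          have := mul_le_mul_of_nonneg_right hlog hy0
          linarith
        · rw [if_neg h1, zero_mul]
          have : 0 ≤ (T - Real.log R) * w y := mul_nonneg (by linarith) hy0
          linarith
    have hGle : Gfun w x ≤ Real.log (1 / ρ) * m + 2 * m + (T - Real.log R) * (1 - m) := by
      have hFi : Integrable (fun y : ℝ × ℝ => M₁ y + M₂ y + M₃ y) := by
        exact (hM₁i.add hM₂i).add hM₃i
      have h := integral_mono_of_nonneg hGnn hFi hmaj
      rwa [MeasureTheory.integral_add (by exact hM₁i.add hM₂i) hM₃i,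
        MeasureTheory.integral_add hM₁i hM₂i, hIM₁, hIM₂, hIM₃] at h
    have hmlm : -1 ≤ m * Real.log m := by
      have h2 : Real.log (1 / m) ≤ 1 / m - 1 := Real.log_le_sub_one_of_pos (by positivity)
      have h3 : m * Real.log (1 / m) ≤ m * (1 / m - 1) :=
        mul_le_mul_of_nonneg_left h2 hm0
      rw [one_div, Real.log_inv] at h3
      have h5 : m * (m⁻¹ - 1) = 1 - m := by field_simp
      linarith [h3, h5, hm1]
    have hb1 : lπK * m ≤ lπK := mul_le_of_le_one_right hlπK hm1
    have hb4 : C * (1 + L) * (1 / 2) ≤ C * (1 + L) * (1 - m) :=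
      mul_le_mul_of_nonneg_left (by linarith)
        (mul_nonneg (by linarith) (by linarith))
    have hb5 : C * (1 + L) = 7 + 7 * L + lπK + lπK * L := by rw [hCdef]; ring
    have hb6 : 0 ≤ lπK * L := mul_nonneg hlπK hL.le
    rw [hlogρ, hlogR] at hGle
    have hexp : (T + (lπK - Real.log m) / 2) * m + 2 * m + (T - C * (1 + L)) * (1 - m)
        = T + lπK * m / 2 - m * Real.log m / 2 + 2 * m - C * (1 + L) * (1 - m) := by ring
    rw [hexp] at hGle
    linarith [hx, hGle, hb1, hmlm, hb4, hb5, hb6, hcon, hm1, hL]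

/-- any two points of the superlevel set
`{Gw > log(1/ε) − L}` are within distance `2Rε`, where `R = exp(C(1+L))`. -/
theorem stmt_15 : ∀ K > (0:ℝ), ∃ C > (0:ℝ), ∀ ε : ℝ, ε ∈ Set.Ioo (0:ℝ) (1/2) →
    ∀ w : ℝ × ℝ → ℝ, Measurable w →
    (∀ᵐ x : ℝ × ℝ, 0 ≤ w x ∧ w x ≤ K / ε ^ 2) →
    Integrable w → (∫ x : ℝ × ℝ, w x) = 1 →
    ∀ L > (0:ℝ), Real.exp (C * (1 + L)) ≤ 1 / ε →
    ∀ x₁ x₂ : ℝ × ℝ,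
      Real.log (1 / ε) - L ≤ Gfun w x₁ → Real.log (1 / ε) - L ≤ Gfun w x₂ →
      vnorm (x₁ - x₂) ≤ 2 * Real.exp (C * (1 + L)) * ε := by
  intro K hK
  refine ⟨7 + Real.log (π * (K + 1)), ?_, ?_⟩
  · have h1 : (1:ℝ) ≤ π * (K + 1) := by nlinarith [Real.pi_gt_three]
    have h2 := Real.log_nonneg h1
    linarith
  · intro ε hε w hw hwb hwi hw1 L hL hR x₁ x₂ hx₁ hx₂
    have hm₁ := half_lt_mass K hK hε hw hwb hwi hw1 hL hR x₁ hx₁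
    have hm₂ := half_lt_mass K hK hε hw hwb hwi hw1 hL hR x₂ hx₂
    set C := 7 + Real.log (π * (K + 1)) with hCdef
    set R := Real.exp (C * (1 + L)) with hRdef
    set r := R * ε with hrdef
    set B₁ := {y : ℝ × ℝ | vnorm (x₁ - y) ≤ r} with hB₁def
    set B₂ := {y : ℝ × ℝ | vnorm (x₂ - y) ≤ r} with hB₂def
    have hB₂ : MeasurableSet B₂ :=
      measurableSet_le
        ((continuous_vnorm.comp (continuous_const.sub continuous_id)).measurable)
        measurable_const
    by_contra hcontra
    push_neg at hcontra
    have hdisj : Disjoint B₁ B₂ := by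
      rw [Set.disjoint_left]
      intro y h1 h2
      have h1' : vnorm (x₁ - y) ≤ r := h1
      have h2' : vnorm (x₂ - y) ≤ r := h2
      have htri : vnorm (x₁ - x₂) ≤ vnorm (x₁ - y) + vnorm (x₂ - y) := by
        have h := vnorm_add_le (x₁ - y) (-(x₂ - y))
        rw [vnorm_neg] at h
        have harg : (x₁ - y) + -(x₂ - y) = x₁ - x₂ := by abel
        rw [harg] at h
        exact h
      have : 2 * R * ε < vnorm (x₁ - x₂) := hcontra
      rw [hrdef] at h1' h2'
      linarith
    have hsum := setIntegral_union hdisj hB₂ hwi.integrableOn hwi.integrableOn (f := w)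
    have hwnn : ∀ᵐ y : ℝ × ℝ, 0 ≤ w y := hwb.mono fun y h => h.1
    have hle : ∫ y in B₁ ∪ B₂, w y ≤ 1 := hw1 ▸ setIntegral_le_integral hwi hwnn
    linarith [hm₁, hm₂, hsum, hle]
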